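/- Let A be a finite dimensional k-algebra and Q a finite dimensional A-module with both irreducible head and irreducible socle. Then J = J' = rad B where B = End_A(Q), and for all n ≥ 0: (rad B)·rad_A^n Q ⊆ rad_A^{n+1}Q and (rad B)·soc^A_{-n}Q ⊆ soc^A_{-n+1}Q. -/

import Mathlib

/-- The socle series of a module (see statement 0). -/
noncomputable def socS (A : Type*) [Ring A] (Q : Type*) [AddCommGroup Q] [Module A Q] :
    ℕ → Submodule A Q
  | 0 => ⊥
  | n + 1 => socS A Q n ⊔ sSup {W : Submodule A Q | socS A Q n ⋖ W}

/-- The radical series of a module (see statement 1). -/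
noncomputable def radS (A : Type*) [Ring A] (Q : Type*) [AddCommGroup Q] [Module A Q] :
    ℕ → Submodule A Q
  | 0 => ⊤
  | n + 1 => Submodule.span A
      {y : Q | ∃ a ∈ Ideal.jacobson (⊥ : Ideal A), ∃ x ∈ radS A Q n, y = a • x}

open LinearMap Submodule
section Aux1
variable {A : Type*} [Ring A]

theorem jac_smul_simple {M : Type*} [AddCommGroup M] [Module A M] [IsSimpleModule A M]
    {a : A} (ha : a ∈ Ideal.jacobson (⊥ : Ideal A)) (x : M) : a • x = 0 := by
  rcases eq_or_ne x 0 with rfl | hx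
  · simp
  · have hm := IsSimpleModule.ker_toSpanSingleton_isMaximal A hx
    have hle : Ideal.jacobson (⊥ : Ideal A) ≤ LinearMap.ker (LinearMap.toSpanSingleton A M x) :=
      sInf_le ⟨bot_le, hm⟩
    simpa [LinearMap.mem_ker, LinearMap.toSpanSingleton_apply] using hle ha

theorem jac_mul_right {a : A} (ha : a ∈ Ideal.jacobson (⊥ : Ideal A)) (r : A) :
    a * r ∈ Ideal.jacobson (⊥ : Ideal A) := by
  show a * r ∈ sInf {J : Ideal A | ⊥ ≤ J ∧ J.IsMaximal}
  refine Submodule.mem_sInf.2 fun J hJ => ?_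
  haveI : IsSimpleModule A (A ⧸ J) := isSimpleModule_iff_isCoatom.mpr (Ideal.isMaximal_def.mp hJ.2)
  have h2 := jac_smul_simple (M := A ⧸ J) ha (Submodule.Quotient.mk r)
  rwa [← Submodule.Quotient.mk_smul, smul_eq_mul, Submodule.Quotient.mk_eq_zero] at h2

end Aux1

/-- The annihilator series: `annS A Q n` is the set of elements killed by any product of
`n` elements of the Jacobson radical of `A`. -/
noncomputable def annS (A : Type*) [Ring A] (Q : Type*) [AddCommGroup Q] [Module A Q] :
    ℕ → Submodule A Q
  | 0 => ⊥
  | n + 1 =>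
    { carrier := {x : Q | ∀ a ∈ Ideal.jacobson (⊥ : Ideal A), a • x ∈ annS A Q n}
      add_mem' := fun hx hy a ha => by rw [smul_add]; exact add_mem (hx a ha) (hy a ha)
      zero_mem' := fun a ha => by rw [smul_zero]; exact zero_mem _
      smul_mem' := fun r x hx a ha => by rw [smul_smul]; exact hx (a * r) (jac_mul_right ha r) }

theorem mem_annS_succ {A : Type*} [Ring A] {Q : Type*} [AddCommGroup Q] [Module A Q] {n : ℕ}
    {x : Q} : x ∈ annS A Q (n + 1) ↔ ∀ a ∈ Ideal.jacobson (⊥ : Ideal A), a • x ∈ annS A Q n :=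
  Iff.rfl

section Aux2
variable {A : Type*} [Ring A]

theorem IsSimpleModule.isSemisimple {M : Type*} [AddCommGroup M] [Module A M]
    [IsSimpleModule A M] : IsSemisimpleModule A M :=
  IsSemisimpleModule.of_sSup_simples_eq_top
    (top_unique (le_sSup (show IsSimpleModule A ↥(⊤ : Submodule A M) from
      .congr Submodule.topEquiv)))

theorem semisimple_prod {M P : Type*} [AddCommGroup M] [Module A M] [AddCommGroup P] [Module A P]
    [IsSemisimpleModule A M] [IsSemisimpleModule A P] : IsSemisimpleModule A (M × P) := by
  have h1 : IsSemisimpleModule A ↥(LinearMap.range (LinearMap.inl A M P)) := .range _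
  have h2 : IsSemisimpleModule A ↥(LinearMap.range (LinearMap.inr A M P)) := .range _
  have h3 := IsSemisimpleModule.sup h1 h2
  rw [LinearMap.sup_range_inl_inr] at h3
  exact .congr Submodule.topEquiv.symm

theorem exists_finset_maximal_inf [IsArtinian A A] :
    ∃ t : Finset (Ideal A), (∀ m ∈ t, m.IsMaximal) ∧ t.inf id = Ideal.jacobson (⊥ : Ideal A) := by
  classical
  let S : Set (Ideal A) := {I | ∃ t : Finset (Ideal A), (∀ m ∈ t, m.IsMaximal) ∧ t.inf id = I}
  obtain ⟨I₀, ⟨t, ht, htI⟩, hmin⟩ :=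
    IsArtinian.set_has_minimal S ⟨⊤, ∅, by simp, by simp⟩
  have hle : ∀ m : Ideal A, m.IsMaximal → I₀ ≤ m := by
    intro m hm
    have hmem : I₀ ⊓ m ∈ S := by
      refine ⟨insert m t, ?_, ?_⟩
      · intro m' hm'
        rcases Finset.mem_insert.mp hm' with rfl | h
        exacts [hm, ht m' h]
      · rw [Finset.inf_insert, id_eq, htI, inf_comm]
    have heq : I₀ ⊓ m = I₀ := by
      by_contra hne
      exact hmin _ hmem (lt_of_le_of_ne inf_le_left hne)
    exact inf_eq_left.mp heq
  refine ⟨t, ht, htI.trans (le_antisymm ?_ ?_)⟩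
  · exact le_sInf fun J hJ => hle J hJ.2
  · rw [← htI]; exact Finset.le_inf fun m hm => sInf_le ⟨bot_le, ht m hm⟩

theorem semisimple_quot_inf (t : Finset (Ideal A)) (ht : ∀ m ∈ t, m.IsMaximal) :
    IsSemisimpleModule A (A ⧸ (t.inf id : Ideal A)) := by
  classical
  induction t using Finset.induction_on with
  | empty =>
      rw [Finset.inf_empty]
      have hsub : Subsingleton (A ⧸ (⊤ : Ideal A)) :=
        Submodule.Quotient.subsingleton_iff.mpr rfl
      refine { toComplementedLattice := ⟨fun a => ⟨⊥, ?_⟩⟩ }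
      have : a = ⊤ := Subsingleton.elim a ⊤
      rw [this]; exact isCompl_top_bot
  | @insert m s hm ih =>
      rw [Finset.inf_insert, id_eq]
      haveI h1 : IsSimpleModule A (A ⧸ (m : Ideal A)) :=
        isSimpleModule_iff_isCoatom.mpr
          (Ideal.isMaximal_def.mp (ht m (Finset.mem_insert_self m s)))
      haveI h1' : IsSemisimpleModule A (A ⧸ (m : Ideal A)) := IsSimpleModule.isSemisimple
      haveI h2 : IsSemisimpleModule A (A ⧸ (s.inf _root_.id : Ideal A)) :=
        ih fun m' hm' => ht m' (Finset.mem_insert_of_mem hm')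
      haveI h3 : IsSemisimpleModule A ((A ⧸ (m : Ideal A)) × (A ⧸ (s.inf _root_.id : Ideal A))) :=
        semisimple_prod
      set f : A →ₗ[A] (A ⧸ (m : Ideal A)) × (A ⧸ (s.inf _root_.id : Ideal A)) :=
        LinearMap.prod (m : Ideal A).mkQ (s.inf _root_.id : Ideal A).mkQ with hf
      haveI h4 : IsSemisimpleModule A ↥(LinearMap.range f) := inferInstance
      have hker : m ⊓ s.inf _root_.id = LinearMap.ker f := by
        rw [hf, LinearMap.ker_prod, Submodule.ker_mkQ, Submodule.ker_mkQ]
      exact .congr ((Submodule.quotEquivOfEq _ _ hker).trans (LinearMap.quotKerEquivRange f))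

theorem semisimple_quot [IsArtinian A A] {K : Ideal A}
    (hK : Ideal.jacobson (⊥ : Ideal A) ≤ K) : IsSemisimpleModule A (A ⧸ K) := by
  obtain ⟨t, ht, hinf⟩ := exists_finset_maximal_inf (A := A)
  haveI : IsSemisimpleModule A (A ⧸ (Ideal.jacobson (⊥ : Ideal A))) := by
    rw [← hinf]; exact semisimple_quot_inf t ht
  exact .congr (Submodule.quotientQuotientEquivQuotient _ K hK).symm

theorem mem_sSup_atoms_of_jac [IsArtinian A A] {M : Type*} [AddCommGroup M] [Module A M] {x : M}
    (h : ∀ a ∈ Ideal.jacobson (⊥ : Ideal A), a • x = 0) :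
    x ∈ sSup {m : Submodule A M | IsAtom m} := by
  set f := LinearMap.toSpanSingleton A M x with hf
  have hK : Ideal.jacobson (⊥ : Ideal A) ≤ LinearMap.ker f := fun a ha => by
    simpa [hf, LinearMap.mem_ker, LinearMap.toSpanSingleton_apply] using h a ha
  haveI := semisimple_quot hK
  haveI hC : IsSemisimpleModule A ↥(LinearMap.range f) :=
    .congr (LinearMap.quotKerEquivRange f).symm
  have hx : x ∈ LinearMap.range f := ⟨1, by simp [hf]⟩
  have htop := IsSemisimpleModule.sSup_simples_eq_top A ↥(LinearMap.range f)
  have hx' : (⟨x, hx⟩ : ↥(LinearMap.range f)) ∈ (⊤ : Submodule A ↥(LinearMap.range f)) := trivial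
  rw [← htop, sSup_eq_iSup'] at hx'
  have hx'' : x ∈ Submodule.map (LinearMap.range f).subtype
      (⨆ m : {m : Submodule A ↥(LinearMap.range f) // IsSimpleModule A m},
        (m : Submodule A ↥(LinearMap.range f))) := ⟨_, hx', rfl⟩
  rw [Submodule.map_iSup] at hx''
  refine (iSup_le fun m => ?_ : _ ≤ sSup {m : Submodule A M | IsAtom m}) hx''
  refine le_sSup ?_
  have hsimple : IsSimpleModule A
      ↥(Submodule.map (LinearMap.range f).subtype (m : Submodule A ↥(LinearMap.range f))) := by
    haveI := m.2
    exact .congr (Submodule.equivMapOfInjective _ (Submodule.injective_subtype _) _).symm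
  exact isSimpleModule_iff_isAtom.mp hsimple

end Aux2

section Aux3
variable {A : Type*} [Ring A] {M : Type*} [AddCommGroup M] [Module A M]

theorem map_mkQ_self_eq_bot (p : Submodule A M) : Submodule.map p.mkQ p = ⊥ := by
  rw [eq_bot_iff]
  rintro y ⟨x, hx, rfl⟩
  simpa [Submodule.mkQ_apply, Submodule.Quotient.mk_eq_zero] using hx

theorem map_comap_mkQ (p : Submodule A M) (b : Submodule A (M ⧸ p)) :
    Submodule.map p.mkQ (Submodule.comap p.mkQ b) = b := by
  rw [Submodule.map_comap_eq, Submodule.range_mkQ, top_inf_eq]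

theorem isAtom_map_of_covBy {p W : Submodule A M} (h : p ⋖ W) :
    IsAtom (Submodule.map p.mkQ W) := by
  obtain ⟨hpW, hmax⟩ := h
  constructor
  · obtain ⟨x, hxW, hxp⟩ := SetLike.exists_of_lt hpW
    intro hb
    have hmem : p.mkQ x ∈ Submodule.map p.mkQ W := Submodule.mem_map_of_mem hxW
    rw [hb, Submodule.mem_bot, Submodule.mkQ_apply, Submodule.Quotient.mk_eq_zero] at hmem
    exact hxp hmem
  · intro b hb
    have hcb : p ≤ Submodule.comap p.mkQ b := Submodule.le_comap_mkQ p b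
    have hWc : Submodule.comap p.mkQ b ≤ W := by
      have h1 : Submodule.comap p.mkQ b ≤ Submodule.comap p.mkQ (Submodule.map p.mkQ W) :=
        Submodule.comap_mono hb.le
      rwa [Submodule.comap_map_mkQ, sup_eq_right.mpr hpW.le] at h1
    rcases eq_or_lt_of_le hcb with heq | hlt
    · rw [← map_comap_mkQ p b, ← heq, map_mkQ_self_eq_bot]
    · exfalso
      have hne : Submodule.comap p.mkQ b ≠ W := by
        intro hEq
        have : Submodule.map p.mkQ W = b := by rw [← hEq, map_comap_mkQ]
        exact hb.ne' this
      exact hmax hlt (lt_of_le_of_ne hWc hne)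

theorem covBy_comap_of_isAtom {p : Submodule A M} {a : Submodule A (M ⧸ p)} (h : IsAtom a) :
    p ⋖ Submodule.comap p.mkQ a := by
  constructor
  · refine lt_of_le_of_ne (Submodule.le_comap_mkQ p a) fun hEq => h.1 ?_
    rw [← map_comap_mkQ p a, ← hEq, map_mkQ_self_eq_bot]
  · intro z hpz hza
    have hmapne : Submodule.map p.mkQ z ≠ ⊥ := by
      obtain ⟨x, hxz, hxp⟩ := SetLike.exists_of_lt hpz
      intro hb
      have hmem : p.mkQ x ∈ Submodule.map p.mkQ z := Submodule.mem_map_of_mem hxz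
      rw [hb, Submodule.mem_bot, Submodule.mkQ_apply, Submodule.Quotient.mk_eq_zero] at hmem
      exact hxp hmem
    have hle : Submodule.map p.mkQ z ≤ a := by
      have h2 : Submodule.map p.mkQ z ≤ Submodule.map p.mkQ (Submodule.comap p.mkQ a) :=
        Submodule.map_mono hza.le
      rwa [map_comap_mkQ] at h2
    have hne : Submodule.map p.mkQ z ≠ a := by
      intro hEq
      have h1 : Submodule.comap p.mkQ (Submodule.map p.mkQ z) = z := by
        rw [Submodule.comap_map_mkQ, sup_eq_right.mpr hpz.le]
      rw [hEq] at h1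
      exact hza.ne (h1.symm)
    exact hmapne (h.2 _ (lt_of_le_of_ne hle hne))

theorem socS_succ (Q : Type*) [AddCommGroup Q] [Module A Q] (n : ℕ) :
    socS A Q (n + 1) = Submodule.comap (socS A Q n).mkQ
      (sSup {a : Submodule A (Q ⧸ socS A Q n) | IsAtom a}) := by
  apply le_antisymm
  · show socS A Q n ⊔ sSup {W : Submodule A Q | socS A Q n ⋖ W} ≤ _
    refine sup_le (Submodule.le_comap_mkQ _ _) (sSup_le fun W hW => ?_)
    refine le_trans (Submodule.le_comap_map _ W) (Submodule.comap_mono ?_)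
    exact le_sSup (isAtom_map_of_covBy hW)
  · have h1 : sSup {a : Submodule A (Q ⧸ socS A Q n) | IsAtom a} ≤
        Submodule.map (socS A Q n).mkQ (socS A Q (n + 1)) := by
      refine sSup_le fun a ha => ?_
      rw [← map_comap_mkQ (socS A Q n) a]
      refine Submodule.map_mono ?_
      have hmem : Submodule.comap (socS A Q n).mkQ a ∈ {W : Submodule A Q | socS A Q n ⋖ W} :=
        covBy_comap_of_isAtom ha
      refine le_trans (le_sSup hmem) ?_
      show sSup {W : Submodule A Q | socS A Q n ⋖ W} ≤ socS A Q (n + 1)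
      exact le_sup_right
    refine le_trans (Submodule.comap_mono h1) ?_
    rw [Submodule.comap_map_mkQ]
    exact sup_le (le_trans le_sup_left (le_of_eq rfl)) le_rfl
end Aux3

section Aux4
variable {A : Type*} [Ring A] {Q : Type*} [AddCommGroup Q] [Module A Q]

theorem socS_zero : socS A Q 0 = ⊥ := by rw [socS]

theorem socS_succ_def (n : ℕ) :
    socS A Q (n + 1) = socS A Q n ⊔ sSup {W : Submodule A Q | socS A Q n ⋖ W} := by rw [socS]

theorem radS_zero : radS A Q 0 = ⊤ := by rw [radS]

theorem radS_succ_def (n : ℕ) :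
    radS A Q (n + 1) = Submodule.span A
      {y : Q | ∃ a ∈ Ideal.jacobson (⊥ : Ideal A), ∃ x ∈ radS A Q n, y = a • x} := by rw [radS]

theorem annS_mono (n : ℕ) : annS A Q n ≤ annS A Q (n + 1) := by
  induction n with
  | zero => exact bot_le
  | succ n ih => exact fun x hx a ha => ih (hx a ha)

theorem socS_eq_annS [IsArtinian A A] (n : ℕ) : socS A Q n = annS A Q n := by
  induction n with
  | zero => rw [socS_zero]; rfl
  | succ n ih =>
    apply le_antisymm
    · rw [socS_succ]
      intro x hx
      have hx' : (socS A Q n).mkQ x ∈ sSup {m : Submodule A (Q ⧸ socS A Q n) | IsAtom m} :=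
        Submodule.mem_comap.mp hx
      have hle : sSup {m : Submodule A (Q ⧸ socS A Q n) | IsAtom m} ≤
          annS A (Q ⧸ socS A Q n) 1 := by
        refine sSup_le fun m hm => ?_
        haveI : IsSimpleModule A ↥m := isSimpleModule_iff_isAtom.mpr hm
        intro y hy a' ha'
        have h0 : a' • (⟨y, hy⟩ : ↥m) = 0 := jac_smul_simple (M := ↥m) ha' _
        have h1 : a' • y = 0 := by simpa using congrArg Subtype.val h0
        rw [h1]; exact Submodule.zero_mem _
      intro a ha
      have h2 : a • (socS A Q n).mkQ x ∈ (⊥ : Submodule A (Q ⧸ socS A Q n)) := hle hx' a ha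
      rw [Submodule.mem_bot] at h2
      have h3 : (socS A Q n).mkQ (a • x) = 0 := by rw [map_smul]; exact h2
      rw [Submodule.mkQ_apply, Submodule.Quotient.mk_eq_zero] at h3
      exact ih ▸ h3
    · intro x hx
      have hkill : ∀ a ∈ Ideal.jacobson (⊥ : Ideal A), a • ((socS A Q n).mkQ x) = 0 := by
        intro a ha
        have h1 : a • x ∈ socS A Q n := by rw [ih]; exact hx a ha
        rw [← map_smul, Submodule.mkQ_apply, Submodule.Quotient.mk_eq_zero]
        exact h1
      rw [socS_succ]
      exact Submodule.mem_comap.mpr (mem_sSup_atoms_of_jac hkill)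

theorem socS_reaches_top [IsArtinian A Q] [IsNoetherian A Q] : ∃ n, socS A Q n = ⊤ := by
  have hmono : Monotone (fun n => socS A Q n) := monotone_nat_of_le_succ fun n => by
    rw [socS_succ_def]; exact le_sup_left
  obtain ⟨n, hn⟩ := monotone_stabilizes_iff_noetherian.mpr inferInstance ⟨_, hmono⟩
  refine ⟨n, ?_⟩
  by_contra hne
  have hlt : socS A Q n < ⊤ := lt_top_iff_ne_top.mpr hne
  haveI : Nontrivial (Q ⧸ socS A Q n) := Submodule.Quotient.nontrivial_iff.mpr hlt.ne
  haveI : IsAtomic (Submodule A (Q ⧸ socS A Q n)) :=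
    isAtomic_of_orderBot_wellFounded_lt wellFounded_lt
  obtain ⟨a, ha⟩ : ∃ a : Submodule A (Q ⧸ socS A Q n), IsAtom a := by
    rcases IsAtomic.eq_bot_or_exists_atom_le (⊤ : Submodule A (Q ⧸ socS A Q n)) with h | ⟨a, ha, _⟩
    · obtain ⟨y, hy⟩ := exists_ne (0 : Q ⧸ socS A Q n)
      have hmem : y ∈ (⊤ : Submodule A (Q ⧸ socS A Q n)) := trivial
      rw [h, Submodule.mem_bot] at hmem
      exact absurd hmem hy
    · exact ⟨a, ha⟩
  have hcov := covBy_comap_of_isAtom (p := socS A Q n) ha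
  have hmem : Submodule.comap (socS A Q n).mkQ a ∈ {W : Submodule A Q | socS A Q n ⋖ W} := hcov
  have hle : Submodule.comap (socS A Q n).mkQ a ≤ socS A Q (n + 1) := by
    rw [socS_succ_def]; exact le_trans (le_sSup hmem) le_sup_right
  have heq : socS A Q n = socS A Q (n + 1) := hn (n + 1) (Nat.le_succ n)
  exact absurd (hle.trans_eq heq.symm) hcov.lt.not_ge

theorem nakayama_span (s : Finset Q)
    (h : Submodule.span A (s : Set Q) ≤ Submodule.span A
      {y : Q | ∃ a ∈ Ideal.jacobson (⊥ : Ideal A), ∃ x ∈ Submodule.span A (s : Set Q), y = a • x}) :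
    Submodule.span A (s : Set Q) = ⊥ := by
  classical
  induction s using Finset.strongInduction with
  | _ s ih =>
    rcases s.eq_empty_or_nonempty with rfl | ⟨x₀, hx₀⟩
    · simp
    · have key : ∀ w ∈ Submodule.span A
          {y : Q | ∃ a ∈ Ideal.jacobson (⊥ : Ideal A), ∃ x ∈ Submodule.span A (s : Set Q), y = a • x},
          ∃ f : Q → A, (∀ y, f y ∈ Ideal.jacobson (⊥ : Ideal A)) ∧ w = ∑ y ∈ s, f y • y := by
        intro w hw
        induction hw using Submodule.span_induction with
        | mem y hy =>
          obtain ⟨a, ha, x, hx, rfl⟩ := hy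
          obtain ⟨g, hg⟩ := mem_span_finset.mp hx
          refine ⟨fun y => a * g y, fun y => jac_mul_right ha _, ?_⟩
          rw [← hg.2, Finset.smul_sum]
          exact Finset.sum_congr rfl fun y _ => by simp only [smul_smul]
        | zero => exact ⟨0, fun y => (Ideal.jacobson (⊥ : Ideal A)).zero_mem, by simp⟩
        | add u v hu hv hu' hv' =>
          obtain ⟨f1, hf1, rfl⟩ := hu'
          obtain ⟨f2, hf2, rfl⟩ := hv'
          refine ⟨f1 + f2, fun y => (Ideal.jacobson (⊥ : Ideal A)).add_mem (hf1 y) (hf2 y), ?_⟩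
          rw [← Finset.sum_add_distrib]
          exact Finset.sum_congr rfl fun y _ => by rw [Pi.add_apply, add_smul]
        | smul r u hu hu' =>
          obtain ⟨f1, hf1, rfl⟩ := hu'
          refine ⟨fun y => r * f1 y, fun y => (Ideal.jacobson (⊥ : Ideal A)).mul_mem_left r (hf1 y), ?_⟩
          rw [Finset.smul_sum]
          exact Finset.sum_congr rfl fun y _ => by simp only [smul_smul]
      obtain ⟨f, hf, hrep⟩ := key x₀ (h (Submodule.subset_span hx₀))
      rw [← Finset.add_sum_erase s _ hx₀] at hrep
      obtain ⟨z, hz⟩ := Ideal.mem_jacobson_iff.mp (hf x₀) (-1)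
      rw [Ideal.mem_bot] at hz
      have hz1 : z * (1 - f x₀) = 1 := by
        have h0 : -(z * f x₀) + z - 1 = 0 := by
          calc -(z * f x₀) + z - 1 = z * -1 * f x₀ + z - 1 := by
                rw [mul_neg_one, neg_mul]
          _ = 0 := hz
        calc z * (1 - f x₀) = (-(z * f x₀) + z - 1) + 1 := by rw [mul_sub, mul_one]; abel
        _ = 0 + 1 := by rw [h0]
        _ = 1 := zero_add 1
      have hx0span : (x₀ : Q) ∈ Submodule.span A ((s.erase x₀ : Finset Q) : Set Q) := by
        have h2 : (1 - f x₀) • x₀ = ∑ y ∈ s.erase x₀, f y • y := by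
          rw [sub_smul, one_smul]
          nth_rewrite 1 [hrep]
          abel
        have hmem : (1 - f x₀) • x₀ ∈ Submodule.span A ((s.erase x₀ : Finset Q) : Set Q) := by
          rw [h2]
          exact Submodule.sum_mem _ fun y hy => Submodule.smul_mem _ _ (Submodule.subset_span hy)
        have h4 := Submodule.smul_mem (Submodule.span A ((s.erase x₀ : Finset Q) : Set Q)) z hmem
        rw [smul_smul, hz1, one_smul] at h4
        exact h4
      have hspan_eq : Submodule.span A (s : Set Q) =
          Submodule.span A ((s.erase x₀ : Finset Q) : Set Q) := by
        apply le_antisymm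
        · rw [Submodule.span_le]
          intro y hy
          rcases eq_or_ne y x₀ with rfl | hne
          · exact hx0span
          · exact Submodule.subset_span (Finset.mem_coe.mpr (Finset.mem_erase.mpr ⟨hne, hy⟩))
        · exact Submodule.span_mono fun y hy => Finset.mem_coe.mpr
            (Finset.mem_of_mem_erase (Finset.mem_coe.mp hy))
      rw [hspan_eq] at h ⊢
      exact ih (s.erase x₀) (Finset.erase_ssubset hx₀) h

theorem radS_succ_le (n : ℕ) : radS A Q (n + 1) ≤ radS A Q n := by
  induction n with
  | zero => rw [radS_zero]; exact le_top
  | succ n ih =>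
    rw [radS_succ_def (n := n + 1), Submodule.span_le]
    rintro y ⟨a, ha, x, hx, rfl⟩
    rw [radS_succ_def]
    exact Submodule.subset_span ⟨a, ha, x, ih hx, rfl⟩

theorem radS_antitone : Antitone (fun n => radS A Q n) :=
  antitone_nat_of_succ_le radS_succ_le

theorem radS_reaches_bot [IsArtinian A Q] [IsNoetherian A Q] : ∃ n, radS A Q n = ⊥ := by
  have hanti : Monotone (fun n => OrderDual.toDual (radS A Q n)) := fun m n h =>
    radS_antitone h
  obtain ⟨n, hn⟩ := IsArtinian.monotone_stabilizes ⟨_, hanti⟩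
  have heq : radS A Q n = radS A Q (n + 1) := hn (n + 1) (Nat.le_succ n)
  obtain ⟨s, hs⟩ := (IsNoetherian.noetherian (radS A Q n) : (radS A Q n).FG)
  refine ⟨n, ?_⟩
  rw [← hs]
  apply nakayama_span
  rw [hs, ← radS_succ_def]
  exact heq.le

theorem end_maps_radS (f : Module.End A Q) (n : ℕ) : ∀ x ∈ radS A Q n, f x ∈ radS A Q n := by
  induction n with
  | zero => intro x _; rw [radS_zero]; trivial
  | succ n ih =>
    intro x hx
    rw [radS_succ_def] at hx ⊢
    induction hx using Submodule.span_induction with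
    | mem y hy =>
      obtain ⟨a, ha, w, hw, rfl⟩ := hy
      rw [map_smul]
      exact Submodule.subset_span ⟨a, ha, f w, ih w hw, rfl⟩
    | zero => rw [map_zero]; exact Submodule.zero_mem _
    | add u v hu hv hu' hv' => rw [map_add]; exact Submodule.add_mem _ hu' hv'
    | smul r u hu hu' => rw [map_smul]; exact Submodule.smul_mem _ _ hu'

theorem radS_shift {c : Module.End A Q} (hc : ∀ q : Q, c q ∈ radS A Q 1) (n : ℕ) :
    ∀ x ∈ radS A Q n, c x ∈ radS A Q (n + 1) := by
  induction n with
  | zero => intro x _; exact hc x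
  | succ n ih =>
    intro x hx
    rw [radS_succ_def] at hx
    induction hx using Submodule.span_induction with
    | mem y hy =>
      obtain ⟨a, ha, w, hw, rfl⟩ := hy
      rw [map_smul, radS_succ_def]
      exact Submodule.subset_span ⟨a, ha, c w, ih w hw, rfl⟩
    | zero => rw [map_zero]; exact Submodule.zero_mem _
    | add u v hu hv hu' hv' => rw [map_add]; exact Submodule.add_mem _ hu' hv'
    | smul r u hu hu' => rw [map_smul]; exact Submodule.smul_mem _ _ hu'

theorem annS_shift {c : Module.End A Q} (hc : ∀ x ∈ annS A Q 1, c x = 0) (n : ℕ) :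
    ∀ x ∈ annS A Q (n + 1), c x ∈ annS A Q n := by
  induction n with
  | zero =>
    intro x hx
    have h0 : c x = 0 := hc x hx
    rw [h0]; exact Submodule.zero_mem _
  | succ n ih =>
    intro x hx a ha
    have h1 : a • c x = c (a • x) := (map_smul c a x).symm
    rw [h1]
    exact ih _ (hx a ha)
end Aux4

/-- if `Q` has irreducible head and irreducible socle then
`J = J' = rad B` where `B = End_A(Q)`, and `rad B` shifts both the radical and socle series. -/
theorem J_eq_J'_eq_radB (k : Type*) [Field k] (A : Type*) [Ring A] [Algebra k A]
    [FiniteDimensional k A] (Q : Type*) [AddCommGroup Q] [Module A Q]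
    [Module k Q] [IsScalarTower k A Q] [FiniteDimensional k Q]
    (hhead : IsSimpleModule A (Q ⧸ radS A Q 1))
    (hsoc : IsSimpleModule A ↥(socS A Q 1)) :
    (∀ b : Module.End A Q,
      ((∀ x ∈ socS A Q 1, b x = 0) ↔ b ∈ Ideal.jacobson (⊥ : Ideal (Module.End A Q)))) ∧
    (∀ b : Module.End A Q,
      ((∀ q : Q, b q ∈ radS A Q 1) ↔ b ∈ Ideal.jacobson (⊥ : Ideal (Module.End A Q)))) ∧
    (∀ b ∈ Ideal.jacobson (⊥ : Ideal (Module.End A Q)), ∀ n : ℕ,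
      (∀ x ∈ radS A Q n, b x ∈ radS A Q (n + 1)) ∧
      (∀ x ∈ socS A Q (n + 1), b x ∈ socS A Q n)) := by
  classical
  haveI hArtA : IsArtinian A A := isArtinian_of_tower k inferInstance
  haveI hArtQ : IsArtinian A Q := isArtinian_of_tower k inferInstance
  haveI hNoeQ : IsNoetherian A Q := isNoetherian_of_tower k inferInstance
  haveI : IsSimpleModule A ↥(socS A Q 1) := hsoc
  have hsocatom : IsAtom (socS A Q 1) := isSimpleModule_iff_isAtom.mp hsoc
  obtain ⟨x₀, hx₀mem, hx₀0⟩ := (Submodule.ne_bot_iff _).mp hsocatom.1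
  haveI hQnt : Nontrivial Q := ⟨⟨x₀, 0, hx₀0⟩⟩
  haveI hEnt : Nontrivial (Module.End A Q) := by
    refine ⟨⟨1, 0, fun heq => hx₀0 ?_⟩⟩
    simpa using DFunLike.congr_fun heq x₀
  have hcoatom : IsCoatom (radS A Q 1) := isSimpleModule_iff_isCoatom.mp hhead
  -- socS 1 is the unique minimal submodule
  have hmin : ∀ N : Submodule A Q, N ≠ ⊥ → socS A Q 1 ≤ N := by
    intro N hN
    haveI : IsAtomic (Submodule A Q) := isAtomic_of_orderBot_wellFounded_lt wellFounded_lt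
    rcases IsAtomic.eq_bot_or_exists_atom_le N with h | ⟨a, ha, haN⟩
    · exact absurd h hN
    · have hales : a ≤ socS A Q 1 := by
        have hmem : a ∈ {W : Submodule A Q | socS A Q 0 ⋖ W} := by
          rw [Set.mem_setOf_eq, socS_zero]; exact ha.bot_covBy
        calc a ≤ sSup {W : Submodule A Q | socS A Q 0 ⋖ W} := le_sSup hmem
        _ ≤ socS A Q 1 := by rw [socS_succ_def]; exact le_sup_right
      have heq : a = socS A Q 1 := by
        rcases eq_or_lt_of_le hales with h' | h'
        · exact h'
        · exact absurd (hsocatom.2 a h') ha.1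
      rw [heq] at haN; exact haN
  -- radS 1 is the unique maximal submodule
  have hmax : ∀ N : Submodule A Q, N ≠ ⊤ → N ≤ radS A Q 1 := by
    intro N hN
    haveI : IsCoatomic (Submodule A Q) := isCoatomic_of_orderTop_gt_wellFounded wellFounded_gt
    rcases IsCoatomic.eq_top_or_exists_le_coatom N with h | ⟨m, hm, hNm⟩
    · exact absurd h hN
    · have hr : radS A Q 1 ≤ m := by
        rw [radS_succ_def, Submodule.span_le]
        rintro y ⟨a, ha, x, _, rfl⟩
        haveI : IsSimpleModule A (Q ⧸ m) := isSimpleModule_iff_isCoatom.mpr hm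
        have h0 : a • m.mkQ x = 0 := jac_smul_simple ha _
        rw [← map_smul, Submodule.mkQ_apply, Submodule.Quotient.mk_eq_zero] at h0
        exact h0
      have hm1 : m = radS A Q 1 := by
        rcases eq_or_lt_of_le hr with h' | h'
        · exact h'.symm
        · exact absurd (hcoatom.2 m h') hm.1
      exact hNm.trans hm1.le
  -- units are not in the Jacobson radical of End
  have hunit_not : ∀ b : Module.End A Q, IsUnit b →
      b ∉ Ideal.jacobson (⊥ : Ideal (Module.End A Q)) := by
    intro b hb hmem
    obtain ⟨z, hz⟩ := Ideal.mem_jacobson_iff.mp hmem (-(↑hb.unit⁻¹))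
    rw [Ideal.mem_bot] at hz
    have h1 : z * -↑hb.unit⁻¹ * b = -z := by
      rw [mul_assoc, neg_mul, hb.val_inv_mul, mul_neg_one]
    rw [h1] at hz
    have hz' : (-1 : Module.End A Q) = 0 := by rw [← hz]; abel
    exact one_ne_zero (neg_eq_zero.mp hz')
  -- direction: kills socle → in radical
  have hdir1 : ∀ b : Module.End A Q, (∀ x ∈ socS A Q 1, b x = 0) →
      b ∈ Ideal.jacobson (⊥ : Ideal (Module.End A Q)) := by
    intro b hb
    rw [Ideal.mem_jacobson_iff]
    intro y
    set c := y * b with hc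
    have hckill : ∀ x ∈ annS A Q 1, c x = 0 := by
      intro x hx
      have hx' : x ∈ socS A Q 1 := by rw [socS_eq_annS]; exact hx
      rw [hc, Module.End.mul_apply, hb x hx', map_zero]
    obtain ⟨m, hm⟩ := socS_reaches_top (A := A) (Q := Q)
    have hmup : annS A Q m = ⊤ := by rw [← socS_eq_annS]; exact hm
    have hpow : ∀ j : ℕ, ∀ x ∈ annS A Q j, (c ^ j) x = 0 := by
      intro j
      induction j with
      | zero =>
        intro x hx
        have hx0 : x = 0 := (Submodule.mem_bot A).mp hx
        rw [hx0, map_zero]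
      | succ j ih =>
        intro x hx
        rw [pow_succ, Module.End.mul_apply]
        exact ih _ (annS_shift hckill j x hx)
    have hnil : IsNilpotent c := by
      refine ⟨m, ?_⟩
      ext q
      rw [LinearMap.zero_apply]
      exact hpow m q (hmup ▸ Submodule.mem_top)
    have hun := hnil.isUnit_add_one
    refine ⟨↑hun.unit⁻¹, ?_⟩
    rw [Ideal.mem_bot]
    calc ↑hun.unit⁻¹ * y * b + ↑hun.unit⁻¹ - 1
        = ↑hun.unit⁻¹ * (c + 1) - 1 := by rw [mul_assoc, ← hc, mul_add, mul_one]
    _ = 1 - 1 := by rw [hun.val_inv_mul]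
    _ = 0 := sub_self 1
  -- direction: maps into radical → in radical
  have hdir2 : ∀ b : Module.End A Q, (∀ q : Q, b q ∈ radS A Q 1) →
      b ∈ Ideal.jacobson (⊥ : Ideal (Module.End A Q)) := by
    intro b hb
    rw [Ideal.mem_jacobson_iff]
    intro y
    set c := y * b with hc
    have hcmaps : ∀ q : Q, c q ∈ radS A Q 1 := by
      intro q
      rw [hc, Module.End.mul_apply]
      exact end_maps_radS y 1 _ (hb q)
    have hpow : ∀ j : ℕ, ∀ q : Q, (c ^ j) q ∈ radS A Q j := by
      intro j
      induction j with
      | zero => intro q; rw [radS_zero]; trivial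
      | succ j ih =>
        intro q
        rw [pow_succ', Module.End.mul_apply]
        exact radS_shift hcmaps j _ (ih q)
    obtain ⟨m, hm⟩ := radS_reaches_bot (A := A) (Q := Q)
    have hnil : IsNilpotent c := by
      refine ⟨m, ?_⟩
      ext q
      rw [LinearMap.zero_apply]
      have := hpow m q
      rw [hm, Submodule.mem_bot] at this
      exact this
    have hun := hnil.isUnit_add_one
    refine ⟨↑hun.unit⁻¹, ?_⟩
    rw [Ideal.mem_bot]
    calc ↑hun.unit⁻¹ * y * b + ↑hun.unit⁻¹ - 1
        = ↑hun.unit⁻¹ * (c + 1) - 1 := by rw [mul_assoc, ← hc, mul_add, mul_one]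
    _ = 1 - 1 := by rw [hun.val_inv_mul]
    _ = 0 := sub_self 1
  -- direction: in radical → kills socle
  have hdir3 : ∀ b ∈ Ideal.jacobson (⊥ : Ideal (Module.End A Q)), ∀ x ∈ socS A Q 1, b x = 0 := by
    intro b hmem x hx
    by_contra hbx
    have hker : LinearMap.ker b = ⊥ := by
      by_contra hk
      exact hbx (LinearMap.mem_ker.mp (hmin _ hk hx))
    have hinj : Function.Injective b := LinearMap.ker_eq_bot.mp hker
    have hsurj := IsArtinian.surjective_of_injective_endomorphism b hinj
    exact hunit_not b ((Module.End.isUnit_iff b).mpr ⟨hinj, hsurj⟩) hmem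
  -- direction: in radical → maps into radical
  have hdir4 : ∀ b ∈ Ideal.jacobson (⊥ : Ideal (Module.End A Q)), ∀ q : Q, b q ∈ radS A Q 1 := by
    intro b hmem q
    by_contra hbq
    have hrange : LinearMap.range b = ⊤ := by
      by_contra hr
      exact hbq (hmax _ hr ⟨q, rfl⟩)
    have hsurj : Function.Surjective b := LinearMap.range_eq_top.mp hrange
    have hinj := IsNoetherian.injective_of_surjective_endomorphism b hsurj
    exact hunit_not b ((Module.End.isUnit_iff b).mpr ⟨hinj, hsurj⟩) hmem
  refine ⟨fun b => ⟨hdir1 b, fun hb => hdir3 b hb⟩,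
    fun b => ⟨hdir2 b, fun hb => hdir4 b hb⟩, ?_⟩
  intro b hb n
  refine ⟨radS_shift (hdir4 b hb) n, ?_⟩
  intro x hx
  have h1 : x ∈ annS A Q (n + 1) := by rw [← socS_eq_annS]; exact hx
  have hbk : ∀ z ∈ annS A Q 1, b z = 0 := by
    intro z hz
    exact hdir3 b hb z (by rw [socS_eq_annS]; exact hz)
  have h2 := annS_shift hbk n x h1
  rw [socS_eq_annS]
  exact h2
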